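/- Let A and B be types and let f : A^ω → 𝒫(B^ω) be prefix-continuous, prefix-closed, and prefix-compact. If L ⊆ B^ω is a guarantee property, then the universal preimage f_U^{-1}(L) is a guarantee property. -/

import Mathlib

/-- The prefix of length `n` of the infinite word `π`, i.e. the list `[π 0, …, π (n-1)]`. -/
def wordPrefix {A : Type*} (π : ℕ → A) (n : ℕ) : List A := (List.range n).map π

/-- The set of prefixes of length `n` of words in `L`. -/
def prefN {A : Type*} (L : Set (ℕ → A)) (n : ℕ) : Set (List A) :=
  (fun π => wordPrefix π n) '' L

/-- The set of all prefixes of words in `L`. -/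
def prefAll {A : Type*} (L : Set (ℕ → A)) : Set (List A) := ⋃ n, prefN L n

/-- The set of all prefixes of the single word `π`. -/
def prefWord {A : Type*} (π : ℕ → A) : Set (List A) := {w | ∃ n, w = wordPrefix π n}

/-- `f` is prefix-continuous. -/
def PrefixContinuous {A B : Type*} (f : (ℕ → A) → Set (ℕ → B)) : Prop :=
  ∀ (n : ℕ) (π : ℕ → A), ∃ m : ℕ, ∀ π' : ℕ → A,
    wordPrefix π' m = wordPrefix π m → prefN (f π) n = prefN (f π') n

/-- `f` is prefix-closed. -/
def PrefixClosed {A B : Type*} (f : (ℕ → A) → Set (ℕ → B)) : Prop :=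
  ∀ (π : ℕ → A) (σ : ℕ → B), prefWord σ ⊆ prefAll (f π) → σ ∈ f π

/-- `f` is prefix-compact. -/
def PrefixCompact {A B : Type*} (f : (ℕ → A) → Set (ℕ → B)) : Prop :=
  ∀ (n : ℕ) (π : ℕ → A), (prefN (f π) n).Finite

/-- The universal preimage of `S` under `f`. -/
def univPreimage {A B : Type*} (f : (ℕ → A) → Set (ℕ → B)) (S : Set (ℕ → B)) :
    Set (ℕ → A) := {π | f π ⊆ S}

/-- The existential preimage of `S` under `f`. -/
def existPreimage {A B : Type*} (f : (ℕ → A) → Set (ℕ → B)) (S : Set (ℕ → B)) :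
    Set (ℕ → A) := {π | (f π ∩ S).Nonempty}

/-- `L` is a safety property. -/
def IsSafetyProperty {B : Type*} (L : Set (ℕ → B)) : Prop :=
  ∃ Φ : Set (List B), L = {π | ∀ n : ℕ, wordPrefix π n ∈ Φ}

/-- `L` is a guarantee property. -/
def IsGuaranteeProperty {B : Type*} (L : Set (ℕ → B)) : Prop :=
  ∃ Φ : Set (List B), L = {π | ∃ n : ℕ, wordPrefix π n ∈ Φ}

/-- `L` is a recurrence property. -/
def IsRecurrenceProperty {B : Type*} (L : Set (ℕ → B)) : Prop :=
  ∃ Φ : Set (List B), L = {π | {n : ℕ | wordPrefix π n ∈ Φ}.Infinite}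

/-- `L` is a persistence property. -/
def IsPersistenceProperty {B : Type*} (L : Set (ℕ → B)) : Prop :=
  ∃ Φ : Set (List B), L = {π | {n : ℕ | wordPrefix π n ∈ Φ}.Finite}

lemma length_wordPrefix {A : Type*} (π : ℕ → A) (n : ℕ) : (wordPrefix π n).length = n := by
  simp [wordPrefix]

lemma wordPrefix_take {A : Type*} (π : ℕ → A) (n k : ℕ) (h : k ≤ n) :
    (wordPrefix π n).take k = wordPrefix π k := by
  simp [wordPrefix, ← List.map_take, List.take_range, Nat.min_eq_left h]

open CategoryTheory Opposite in
lemma konig {B : Type*} (T : ℕ → Set (List B))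
    (hfin : ∀ n, (T n).Finite)
    (hne : ∀ n, (T n).Nonempty)
    (hlen : ∀ n, ∀ w ∈ T n, w.length = n)
    (hdc : ∀ m n, n ≤ m → ∀ w ∈ T m, w.take n ∈ T n) :
    ∃ σ : ℕ → B, ∀ n, wordPrefix σ n ∈ T n := by
  let F : ℕᵒᵖ ⥤ Type _ :=
    { obj := fun n => T n.unop
      map := fun {m n} h => TypeCat.ofHom (fun w => ⟨w.val.take n.unop, hdc _ _ (leOfHom h.unop) _ w.2⟩)
      map_id := fun n => by
        refine ConcreteCategory.hom_ext _ _ fun w => ?_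
        refine Subtype.ext ?_; show List.take _ w.val = w.val; simp [hlen _ _ w.2]
      map_comp := fun {m n p} g h => by
        refine ConcreteCategory.hom_ext _ _ fun w => ?_
        refine Subtype.ext ?_
        show List.take _ w.val = List.take _ (List.take _ w.val)
        simp [List.take_take, Nat.min_eq_left (leOfHom h.unop)] }
  haveI : ∀ j : ℕᵒᵖ, Finite (F.obj j) := fun j => (hfin j.unop).to_subtype
  haveI : ∀ j : ℕᵒᵖ, Nonempty (F.obj j) := fun j => (hne j.unop).to_subtype
  obtain ⟨s, hs⟩ := nonempty_sections_of_finite_inverse_system F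
  obtain ⟨w1, hw1⟩ := hne 1
  have hw1ne : w1 ≠ [] := by
    intro h; have := hlen 1 w1 hw1; rw [h] at this; simp at this
  set b₀ := w1.head hw1ne with hb₀
  refine ⟨fun k => ((s (op (k + 1))).val).getD k b₀, fun n => ?_⟩
  have key : wordPrefix (fun k => ((s (op (k + 1))).val).getD k b₀) n = (s (op n)).val := by
    apply List.ext_getElem
    · rw [length_wordPrefix, hlen _ _ (s (op n)).2]
    · intro i h1 h2
      have hin : i + 1 ≤ n := by rw [length_wordPrefix] at h1; omega
      have hc := hs ((homOfLE hin).op : op n ⟶ op (i+1))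
      simp only [wordPrefix, List.getElem_map]
      have hri : (List.range n)[i]'(by rw [List.length_range]; omega) = i := List.getElem_range _
      rw [hri, ← hc]
      have hl : i < ((s (op n)).val.take (i+1)).length := by
        rw [List.length_take]
        have hh := hlen _ _ (s (op n)).2
        simp only [unop_op] at hh
        omega
      simp only [F]
      change (List.take (i+1) (s (op n)).val).getD i b₀ = _
      rw [List.getD_eq_getElem _ _ hl, List.getElem_take]
  rw [key]
  exact (s (op n)).2

lemma mem_prefN_length {A : Type*} {L : Set (ℕ → A)} {n : ℕ} {w : List A}
    (h : w ∈ prefN L n) : w.length = n := by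
  obtain ⟨ρ, _, rfl⟩ := h; exact length_wordPrefix ρ n

lemma prefN_take {A : Type*} {L : Set (ℕ → A)} {m n : ℕ} (h : n ≤ m) {w : List A}
    (hw : w ∈ prefN L m) : w.take n ∈ prefN L n := by
  obtain ⟨ρ, hρ, rfl⟩ := hw
  exact ⟨ρ, hρ, (wordPrefix_take ρ m n h).symm⟩

/-- The universal preimage of a guarantee property under a prefix-continuous,
prefix-closed, prefix-compact function is a guarantee property. -/
theorem guarantee_closed_under_univPreimage {A B : Type*} (f : (ℕ → A) → Set (ℕ → B))
    (hcont : PrefixContinuous f) (hclosed : PrefixClosed f) (hcomp : PrefixCompact f)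
    (L : Set (ℕ → B)) (hL : IsGuaranteeProperty L) :
    IsGuaranteeProperty (univPreimage f L) := by
  obtain ⟨Φ, rfl⟩ := hL
  refine ⟨{u : List A | ∀ π : ℕ → A, wordPrefix π u.length = u →
      ∃ n, ∀ w ∈ prefN (f π) n, ∃ k, w.take k ∈ Φ}, ?_⟩
  ext π
  constructor
  · intro hπ
    have key : ∃ n, ∀ w ∈ prefN (f π) n, ∃ k, w.take k ∈ Φ := by
      by_contra hcon
      push_neg at hcon
      set T : ℕ → Set (List B) := fun n => {w | w ∈ prefN (f π) n ∧ ∀ k, w.take k ∉ Φ} with hT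
      obtain ⟨σ, hσ⟩ := konig T
        (fun n => (hcomp n π).subset (fun w hw => hw.1))
        (fun n => by
          obtain ⟨w, hw1, hw2⟩ := hcon n
          exact ⟨w, hw1, hw2⟩)
        (fun n w hw => mem_prefN_length hw.1)
        (fun m n hnm w hw => by
          refine ⟨prefN_take hnm hw.1, fun k => ?_⟩
          rw [List.take_take]
          exact hw.2 _)
      have hσf : σ ∈ f π := by
        apply hclosed
        rintro w ⟨n, rfl⟩
        exact Set.mem_iUnion.2 ⟨n, (hσ n).1⟩
      obtain ⟨n, hn⟩ := hπ hσf
      have := (hσ n).2 n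
      rw [List.take_of_length_le (by rw [length_wordPrefix])] at this
      exact this hn
    obtain ⟨n, hn⟩ := key
    obtain ⟨m, hm⟩ := hcont n π
    refine ⟨m, ?_⟩
    intro π' hπ'
    rw [length_wordPrefix] at hπ'
    refine ⟨n, ?_⟩
    rw [← hm π' hπ']
    exact hn
  · rintro ⟨m, hm⟩
    obtain ⟨n, hn⟩ := hm π (by rw [length_wordPrefix])
    intro σ hσ
    obtain ⟨k, hk⟩ := hn (wordPrefix σ n) ⟨σ, hσ, rfl⟩
    rcases le_or_gt k n with h | h
    · rw [wordPrefix_take σ n k h] at hk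
      exact ⟨k, hk⟩
    · rw [List.take_of_length_le (by rw [length_wordPrefix]; omega)] at hk
      exact ⟨n, hk⟩
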